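/- Let G be a complex semisimple Lie group, P, Q parabolic subgroups with P ∩ Q parabolic, and x₀ ∈ G/P the base point. If G/P is Q-cycle-connected, then there exists a positive integer N such that every point of G/P can be connected to x₀ by a chain of Q-cycles of length at most N. -/

import Mathlib

open scoped Pointwise

/-- Surrogate definition of a parabolic subgroup of a (complex semisimple Lie) group:
a closed subgroup with compact (projective) quotient. -/
def IsParabolic (G : Type*) [Group G] [TopologicalSpace G] (H : Subgroup G) : Prop :=
  IsClosed (H : Set G) ∧ CompactSpace (G ⧸ H)

/-- A `Q`-cycle in `G ⧸ P`: a `G`-translate of the `Q`-orbit of the base point `x₀ = 1·P`. -/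
def IsQCycle (G : Type*) [Group G] (P Q : Subgroup G) (C : Set (G ⧸ P)) : Prop :=
  ∃ g : G, C = g • (MulAction.orbit Q ((1 : G) : G ⧸ P))

/-- A chain of `n + 1` `Q`-cycles connecting `x` to `y`: consecutive cycles intersect,
`x` lies in the first one and `y` in the last one. -/
def QCycleChain (G : Type*) [Group G] (P Q : Subgroup G) (n : ℕ) (x y : G ⧸ P) : Prop :=
  ∃ C : Fin (n + 1) → Set (G ⧸ P),
    (∀ i, IsQCycle G P Q (C i)) ∧
    (∀ i : Fin n, (C i.castSucc ∩ C i.succ).Nonempty) ∧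
    x ∈ C 0 ∧ y ∈ C (Fin.last n)

/-- `G ⧸ P` is `Q`-cycle-connected if any two points are joined by a finite chain of
`Q`-cycles. -/
def QCycleConnected (G : Type*) [Group G] (P Q : Subgroup G) : Prop :=
  ∀ x y : G ⧸ P, ∃ n : ℕ, QCycleChain G P Q n x y

/-! ### Auxiliary material -/

open Set

/-- The set `P·(Q·P)ⁿ ⊆ G`, whose image in `G ⧸ P` is the set of points reachable from the
base point by a chain of `n` `Q`-cycles. -/
def BSet {G : Type*} [Group G] (P Q : Subgroup G) : ℕ → Set G
  | 0 => P
  | n + 1 => BSet P Q n * (Q : Set G) * (P : Set G)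

section AuxAlgebra

variable {G : Type*} [Group G] (P Q : Subgroup G)

theorem BSet_mul_P : ∀ n, BSet P Q n * (P : Set G) = BSet P Q n
  | 0 => coe_mul_coe P
  | n + 1 => by
    show BSet P Q n * ↑Q * ↑P * ↑P = BSet P Q n * ↑Q * ↑P
    rw [mul_assoc (BSet P Q n * ↑Q), coe_mul_coe]

theorem one_mem_BSet : ∀ n, (1 : G) ∈ BSet P Q n
  | 0 => P.one_mem
  | n + 1 => by
    have := Set.mul_mem_mul (Set.mul_mem_mul (one_mem_BSet n) Q.one_mem) P.one_mem
    simpa [BSet] using this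

theorem BSet_subset_succ (n : ℕ) : BSet P Q n ⊆ BSet P Q (n + 1) := by
  intro b hb
  have := Set.mul_mem_mul (Set.mul_mem_mul hb Q.one_mem) P.one_mem
  simpa [BSet] using this

theorem BSet_mono : Monotone (BSet P Q) :=
  monotone_nat_of_le_succ (BSet_subset_succ P Q)

theorem BSet_mul : ∀ n m, BSet P Q n * BSet P Q m = BSet P Q (n + m)
  | n, 0 => BSet_mul_P P Q n
  | n, m + 1 => by
    show BSet P Q n * (BSet P Q m * ↑Q * ↑P) = BSet P Q (n + m) * ↑Q * ↑P
    rw [← mul_assoc, ← mul_assoc, BSet_mul n m]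

theorem mem_orbit_iff' (x : G ⧸ P) :
    x ∈ MulAction.orbit Q ((1 : G) : G ⧸ P) ↔ ∃ q ∈ (Q : Set G), x = QuotientGroup.mk q := by
  constructor
  · rintro ⟨⟨q, hq⟩, rfl⟩
    refine ⟨q, hq, ?_⟩
    show _ • ((1 : G) : G ⧸ P) = _
    show ((q * 1 : G) : G ⧸ P) = _
    rw [mul_one]
  · rintro ⟨q, hq, rfl⟩
    refine ⟨⟨q, hq⟩, ?_⟩
    show _ • ((1 : G) : G ⧸ P) = _
    show ((q * 1 : G) : G ⧸ P) = _
    rw [mul_one]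

theorem smul_mk_eq (g a : G) : g • ((a : G ⧸ P)) = ((g * a : G) : G ⧸ P) := rfl

/-- A `Q`-cycle `g • orbit` contains all points `mk (g * q * p)`. -/
theorem mem_cycle_of (g q p : G) (hq : q ∈ Q) (hp : p ∈ P) :
    ((g * q * p : G) : G ⧸ P) ∈ g • MulAction.orbit Q ((1 : G) : G ⧸ P) := by
  have horb : ((q * p : G) : G ⧸ P) ∈ MulAction.orbit Q ((1 : G) : G ⧸ P) := by
    rw [mem_orbit_iff' P Q]
    refine ⟨q, hq, ?_⟩
    exact QuotientGroup.eq.mpr (by simpa using hp)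
  have := Set.smul_mem_smul_set (a := g) horb
  rwa [smul_mk_eq, ← mul_assoc] at this

theorem chain_of_mem : ∀ n (x : G ⧸ P), x ∈ QuotientGroup.mk '' BSet P Q (n + 1) →
    QCycleChain G P Q n ((1 : G) : G ⧸ P) x := by
  intro n
  induction n with
  | zero =>
    rintro x ⟨b, hb, rfl⟩
    obtain ⟨c, hc, p', hp', rfl⟩ := hb
    obtain ⟨p, hp, q, hq, rfl⟩ := hc
    refine ⟨fun _ => p • MulAction.orbit Q ((1 : G) : G ⧸ P), fun _ => ⟨p, rfl⟩,
      fun i => i.elim0, ?_, ?_⟩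
    · refine ⟨((p⁻¹ : G) : G ⧸ P), ?_, ?_⟩
      · rw [mem_orbit_iff' P Q]
        exact ⟨1, Q.one_mem, QuotientGroup.eq.mpr (by simpa [BSet] using hp)⟩
      · show p • ((p⁻¹ : G) : G ⧸ P) = _
        rw [smul_mk_eq, mul_inv_cancel]
    · exact mem_cycle_of P Q p q p' hq hp'
  | succ n ih =>
    rintro x ⟨b, hb, rfl⟩
    obtain ⟨c, hc, p, hp, rfl⟩ := hb
    obtain ⟨b', hb', q, hq, rfl⟩ := hc
    obtain ⟨C, hcyc, hint, hx0, hlast⟩ := ih _ ⟨b', hb', rfl⟩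
    refine ⟨Fin.snoc C (b' • MulAction.orbit Q ((1 : G) : G ⧸ P)), ?_, ?_, ?_, ?_⟩
    · intro i
      refine Fin.lastCases ?_ (fun j => ?_) i
      · rw [Fin.snoc_last]; exact ⟨b', rfl⟩
      · rw [Fin.snoc_castSucc]; exact hcyc j
    · intro i
      refine Fin.lastCases ?_ (fun j => ?_) i
      · rw [Fin.succ_last, Fin.snoc_last, Fin.snoc_castSucc]
        refine ⟨QuotientGroup.mk b', hlast, ?_⟩
        have := mem_cycle_of P Q b' 1 1 Q.one_mem P.one_mem
        simpa using this
      · rw [Fin.succ_castSucc, Fin.snoc_castSucc, Fin.snoc_castSucc]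
        exact hint j
    · rw [← Fin.castSucc_zero, Fin.snoc_castSucc]; exact hx0
    · rw [Fin.snoc_last]; exact mem_cycle_of P Q b' q p hq hp

theorem cycle_subset {D : Set (G ⧸ P)} (hD : IsQCycle G P Q D) {b : G}
    (hb : QuotientGroup.mk b ∈ D) :
    D ⊆ QuotientGroup.mk '' ({b} * (P : Set G) * (Q : Set G) * (P : Set G)) := by
  obtain ⟨g, rfl⟩ := hD
  obtain ⟨w, hw, hgw⟩ := hb
  rw [mem_orbit_iff' P Q] at hw
  obtain ⟨q, hq, rfl⟩ := hw
  have hgq : ((g * q : G) : G ⧸ P) = QuotientGroup.mk b := by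
    rw [← smul_mk_eq]; exact hgw
  have hp : (g * q)⁻¹ * b ∈ P := QuotientGroup.eq.mp hgq
  intro y hy
  obtain ⟨w', hw', rfl⟩ := hy
  rw [mem_orbit_iff' P Q] at hw'
  obtain ⟨q', hq', rfl⟩ := hw'
  refine ⟨b * (((g * q)⁻¹ * b)⁻¹ * (q⁻¹ * q')), ?_, ?_⟩
  · have m1 : b * ((g * q)⁻¹ * b)⁻¹ ∈ {b} * (P : Set G) :=
      Set.mul_mem_mul rfl (P.inv_mem hp)
    have m2 := Set.mul_mem_mul (Set.mul_mem_mul m1 (Q.mul_mem (Q.inv_mem hq) hq')) P.one_mem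
    simpa [mul_assoc] using m2
  · show _ = g • ((q' : G) : G ⧸ P)
    rw [smul_mk_eq]
    congr 1
    group

theorem cycle_subset' {D : Set (G ⧸ P)} (hD : IsQCycle G P Q D) {b : G} {n : ℕ}
    (hbB : b ∈ BSet P Q n) (hb : QuotientGroup.mk b ∈ D) :
    D ⊆ QuotientGroup.mk '' BSet P Q (n + 1) := by
  refine (cycle_subset P Q hD hb).trans (Set.image_mono ?_)
  have h1 : ({b} : Set G) ⊆ BSet P Q n := Set.singleton_subset_iff.mpr hbB
  have h2 : ({b} : Set G) * ↑P * ↑Q * ↑P ⊆ BSet P Q n * ↑P * ↑Q * ↑P :=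
    Set.mul_subset_mul_right (Set.mul_subset_mul_right (Set.mul_subset_mul_right h1))
  rwa [BSet_mul_P] at h2

theorem mem_of_chain : ∀ n (C : Fin (n + 1) → Set (G ⧸ P)),
    (∀ i, IsQCycle G P Q (C i)) → (∀ i : Fin n, (C i.castSucc ∩ C i.succ).Nonempty) →
    ((1 : G) : G ⧸ P) ∈ C 0 →
    C (Fin.last n) ⊆ QuotientGroup.mk '' BSet P Q (n + 1) := by
  intro n
  induction n with
  | zero =>
    intro C hcyc _ hx0
    exact cycle_subset' P Q (hcyc 0) (one_mem_BSet P Q 0) hx0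
  | succ n ih =>
    intro C hcyc hint hx0
    have hres : C ((Fin.last n).castSucc) ⊆ QuotientGroup.mk '' BSet P Q (n + 1) := by
      have := ih (fun j => C j.castSucc) (fun j => hcyc j.castSucc)
        (fun j => by simpa only [Fin.succ_castSucc] using hint j.castSucc)
        (by simpa using hx0)
      simpa using this
    obtain ⟨z, hz1, hz2⟩ := hint (Fin.last n)
    obtain ⟨b, hbB, rfl⟩ := hres hz1
    have := cycle_subset' P Q (hcyc (Fin.last (n + 1))) hbB ?_
    · exact this
    · rwa [← Fin.succ_last]

end AuxAlgebra

section AuxTopology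

variable {G : Type*} [Group G] [TopologicalSpace G] [IsTopologicalGroup G]

theorem myT2 (P : Subgroup G) (h : IsClosed (P : Set G)) : T2Space (G ⧸ P) := by
  rw [t2_iff_isClosed_diagonal, ← isOpen_compl_iff]
  have hop : IsOpenMap (Prod.map (QuotientGroup.mk : G → G ⧸ P) QuotientGroup.mk) :=
    (QuotientGroup.isOpenMap_coe (N := P)).prodMap (QuotientGroup.isOpenMap_coe (N := P))
  have key : (diagonal (G ⧸ P))ᶜ =
      Prod.map (QuotientGroup.mk : G → G ⧸ P) QuotientGroup.mk ''
        {p : G × G | p.1⁻¹ * p.2 ∉ (P : Set G)} := by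
    ext ⟨x, y⟩
    simp only [mem_compl_iff, mem_diagonal_iff, mem_image, mem_setOf_eq, Prod.exists,
      Prod.map_apply, Prod.mk.injEq]
    constructor
    · intro hxy
      obtain ⟨a, rfl⟩ := QuotientGroup.mk_surjective x
      obtain ⟨b, rfl⟩ := QuotientGroup.mk_surjective y
      exact ⟨a, b, fun hm => hxy (QuotientGroup.eq.mpr hm), rfl, rfl⟩
    · rintro ⟨a, b, hm, rfl, rfl⟩ hab
      exact hm (QuotientGroup.eq.mp hab)
  rw [key]
  exact hop _ ((h.preimage (continuous_fst.inv.mul continuous_snd)).isOpen_compl)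

/-- The natural projection `G ⧸ P' → G ⧸ P` when `P' ≤ P`. -/
def projQuot (P' P : Subgroup G) (h : P' ≤ P) : G ⧸ P' → G ⧸ P :=
  Quotient.map' id fun a b hab =>
    QuotientGroup.leftRel_apply.mpr (h (QuotientGroup.leftRel_apply.mp hab))

theorem projQuot_mk (P' P : Subgroup G) (h : P' ≤ P) (a : G) :
    projQuot P' P h (QuotientGroup.mk a) = QuotientGroup.mk a := rfl

theorem continuous_projQuot (P' P : Subgroup G) (h : P' ≤ P) :
    Continuous (projQuot P' P h) :=
  continuous_id.quotient_map' _

theorem preimage_mk_image_mk {H : Subgroup G} {S : Set G} (hS : S * (H : Set G) = S) :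
    (QuotientGroup.mk : G → G ⧸ H) ⁻¹' (QuotientGroup.mk '' S) = S := by
  rw [QuotientGroup.preimage_image_mk_eq_mul, hS]

theorem saturated_of_mul_subgroup {H K : Subgroup G} {S : Set G} (hKH : K ≤ H)
    (hS : S * (H : Set G) = S) : S * (K : Set G) = S := by
  apply subset_antisymm
  · calc S * (K : Set G) ⊆ S * (H : Set G) :=
        Set.mul_subset_mul_left (fun x hx => hKH hx)
    _ = S := hS
  · intro s hs
    simpa using Set.mul_mem_mul hs K.one_mem

variable (P Q : Subgroup G)

theorem isCompact_mk_BSet (hP : IsParabolic G P) (hQ : IsParabolic G Q)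
    (hPQ : IsParabolic G (P ⊓ Q)) (n : ℕ) :
    IsCompact (QuotientGroup.mk '' BSet P Q n : Set (G ⧸ P)) := by
  haveI : T2Space (G ⧸ P) := myT2 P hP.1
  haveI : T2Space (G ⧸ Q) := myT2 Q hQ.1
  haveI : CompactSpace (G ⧸ (P ⊓ Q)) := hPQ.2
  haveI : CompactSpace (G ⧸ Q) := hQ.2
  induction n with
  | zero =>
    have : (QuotientGroup.mk '' BSet P Q 0 : Set (G ⧸ P)) = {((1 : G) : G ⧸ P)} := by
      apply subset_antisymm
      · rintro x ⟨p, hp, rfl⟩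
        simp only [mem_singleton_iff]
        exact (QuotientGroup.eq.mpr (by simpa [BSet] using hp)).symm
      · rintro x rfl
        exact ⟨1, P.one_mem, rfl⟩
    rw [this]
    exact isCompact_singleton
  | succ n ih =>
    set f1 := projQuot (P ⊓ Q) P inf_le_left with hf1
    set f2 := projQuot (P ⊓ Q) Q inf_le_right with hf2
    have hSP : BSet P Q n * (P : Set G) = BSet P Q n := BSet_mul_P P Q n
    -- step 1: pull back to G ⧸ (P ⊓ Q)
    have h1 : f1 ⁻¹' (QuotientGroup.mk '' BSet P Q n) = QuotientGroup.mk '' BSet P Q n := by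
      ext z
      obtain ⟨g, rfl⟩ := QuotientGroup.mk_surjective z
      rw [Set.mem_preimage, hf1, projQuot_mk]
      constructor
      · intro hg
        have : g ∈ BSet P Q n := by
          rw [← preimage_mk_image_mk hSP]; exact hg
        exact ⟨g, this, rfl⟩
      · intro hg
        have : g ∈ BSet P Q n := by
          rw [← preimage_mk_image_mk (saturated_of_mul_subgroup inf_le_left hSP)]
          exact hg
        exact ⟨g, this, rfl⟩
    have c1 : IsCompact (QuotientGroup.mk '' BSet P Q n : Set (G ⧸ (P ⊓ Q))) := by
      rw [← h1]
      exact (ih.isClosed.preimage (continuous_projQuot _ _ _)).isCompact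
    -- step 2: push to G ⧸ Q
    have c2 : IsCompact (QuotientGroup.mk '' BSet P Q n : Set (G ⧸ Q)) := by
      have : f2 '' (QuotientGroup.mk '' BSet P Q n) = QuotientGroup.mk '' BSet P Q n := by
        rw [← Set.image_comp]; rfl
      rw [← this]
      exact c1.image (continuous_projQuot _ _ _)
    -- step 3: pull back again
    have hSQ : BSet P Q n * (Q : Set G) * (Q : Set G) = BSet P Q n * (Q : Set G) := by
      rw [mul_assoc, coe_mul_coe]
    have h2 : f2 ⁻¹' (QuotientGroup.mk '' BSet P Q n) =
        QuotientGroup.mk '' (BSet P Q n * (Q : Set G)) := by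
      ext z
      obtain ⟨g, rfl⟩ := QuotientGroup.mk_surjective z
      rw [Set.mem_preimage, hf2, projQuot_mk]
      have e1 : (QuotientGroup.mk : G → G ⧸ Q) '' BSet P Q n =
          QuotientGroup.mk '' (BSet P Q n * (Q : Set G)) := by
        apply subset_antisymm
        · rintro w ⟨s, hs, rfl⟩
          exact ⟨s, by simpa using Set.mul_mem_mul hs Q.one_mem, rfl⟩
        · rintro w ⟨s, hs, rfl⟩
          obtain ⟨a, ha, q, hq, rfl⟩ := hs
          exact ⟨a, ha, (QuotientGroup.eq.mpr (by simpa using hq)).symm⟩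
      rw [e1]
      constructor
      · intro hg
        have : g ∈ BSet P Q n * (Q : Set G) := by
          rw [← preimage_mk_image_mk hSQ]; exact hg
        exact ⟨g, this, rfl⟩
      · intro hg
        have : g ∈ BSet P Q n * (Q : Set G) := by
          rw [← preimage_mk_image_mk (saturated_of_mul_subgroup inf_le_right hSQ)]
          exact hg
        exact ⟨g, this, rfl⟩
    have c3 : IsCompact (QuotientGroup.mk '' (BSet P Q n * (Q : Set G)) :
        Set (G ⧸ (P ⊓ Q))) := by
      rw [← h2]
      exact (c2.isClosed.preimage (continuous_projQuot _ _ _)).isCompact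
    -- step 4: push forward to G ⧸ P
    have c4 : IsCompact (QuotientGroup.mk '' (BSet P Q n * (Q : Set G)) : Set (G ⧸ P)) := by
      have : f1 '' (QuotientGroup.mk '' (BSet P Q n * (Q : Set G))) =
          QuotientGroup.mk '' (BSet P Q n * (Q : Set G)) := by
        rw [← Set.image_comp]; rfl
      rw [← this]
      exact c3.image (continuous_projQuot _ _ _)
    -- step 5: absorb trailing P
    have e2 : (QuotientGroup.mk : G → G ⧸ P) '' (BSet P Q n * (Q : Set G)) =
        QuotientGroup.mk '' BSet P Q (n + 1) := by
      apply subset_antisymm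
      · rintro w ⟨s, hs, rfl⟩
        exact ⟨s, by simpa [BSet] using Set.mul_mem_mul hs P.one_mem, rfl⟩
      · rintro w ⟨s, hs, rfl⟩
        obtain ⟨a, ha, p, hp, rfl⟩ := hs
        exact ⟨a, ha, (QuotientGroup.eq.mpr (by simpa using hp)).symm⟩
    rw [← e2]
    exact c4

end AuxTopology

/-- If `G ⧸ P` is `Q`-cycle-connected, then there is a uniform bound `N` such that every
point of `G ⧸ P` is connected to the base point `x₀ = 1·P` by a chain of `Q`-cycles of
length at most `N`. -/
theorem stmt2 (G : Type*) [Group G] [TopologicalSpace G] [IsTopologicalGroup G]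
    (P Q : Subgroup G)
    (hP : IsParabolic G P) (hQ : IsParabolic G Q) (hPQ : IsParabolic G (P ⊓ Q))
    (hconn : QCycleConnected G P Q) :
    ∃ N : ℕ, 0 < N ∧ ∀ x : G ⧸ P, ∃ n : ℕ, n + 1 ≤ N ∧
      QCycleChain G P Q n ((1 : G) : G ⧸ P) x := by
  haveI : T2Space (G ⧸ P) := myT2 P hP.1
  haveI : CompactSpace (G ⧸ P) := hP.2
  haveI : BaireSpace (G ⧸ P) := BaireSpace.of_t2Space_locallyCompactSpace
  have hcomp := isCompact_mk_BSet P Q hP hQ hPQ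
  -- the images cover `G ⧸ P`
  have hmem_of_chain : ∀ n (x : G ⧸ P), QCycleChain G P Q n ((1 : G) : G ⧸ P) x →
      x ∈ QuotientGroup.mk '' BSet P Q (n + 1) := by
    rintro n x ⟨C, hcyc, hint, hx0, hlast⟩
    exact mem_of_chain P Q n C hcyc hint hx0 hlast
  have hcover : (⋃ n, (QuotientGroup.mk '' BSet P Q n : Set (G ⧸ P))) = univ := by
    ext x
    simp only [mem_iUnion, mem_univ, iff_true]
    obtain ⟨n, hn⟩ := hconn ((1 : G) : G ⧸ P) x
    exact ⟨n + 1, hmem_of_chain n x hn⟩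
  obtain ⟨m, hm⟩ := nonempty_interior_of_iUnion_of_closed
    (fun n => (hcomp n).isClosed) hcover
  set U := interior (QuotientGroup.mk '' BSet P Q m : Set (G ⧸ P)) with hU
  -- cover by open translates of `U`
  have hopen : ∀ n : ℕ, IsOpen (BSet P Q n • U) := by
    intro n
    rw [← Set.iUnion_smul_set]
    exact isOpen_biUnion fun g _ => isOpen_interior.smul g
  have hcov2 : (univ : Set (G ⧸ P)) ⊆ ⋃ n, BSet P Q n • U := by
    intro x _
    obtain ⟨g, rfl⟩ := QuotientGroup.mk_surjective x
    obtain ⟨u, hu⟩ := hm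
    obtain ⟨h, rfl⟩ := QuotientGroup.mk_surjective u
    have : (QuotientGroup.mk (g * h⁻¹) : G ⧸ P) ∈ ⋃ n, (QuotientGroup.mk '' BSet P Q n :
        Set (G ⧸ P)) := by rw [hcover]; trivial
    obtain ⟨_, ⟨k, rfl⟩, hk⟩ := this
    have hgk : g * h⁻¹ ∈ BSet P Q k := by
      rw [← preimage_mk_image_mk (BSet_mul_P P Q k)]
      exact hk
    refine mem_iUnion.mpr ⟨k, ?_⟩
    have := Set.smul_mem_smul hgk hu
    rwa [smul_mk_eq, inv_mul_cancel_right] at this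
  obtain ⟨t, ht⟩ := isCompact_univ.elim_finite_subcover _ hopen hcov2
  -- take the maximum index
  classical
  set N := t.sup id with hN
  have hsub : (univ : Set (G ⧸ P)) ⊆ BSet P Q N • U := by
    intro x hx
    obtain ⟨_, ⟨k, rfl⟩, _, ⟨hk, rfl⟩, hxk⟩ := ht hx
    exact Set.smul_subset_smul_right (BSet_mono P Q (Finset.le_sup (f := id) hk)) hxk
  -- conclude
  refine ⟨N + m + 1, Nat.succ_pos _, fun x => ⟨N + m, le_refl _, ?_⟩⟩
  apply chain_of_mem
  have hx : x ∈ BSet P Q N • U := hsub (mem_univ x)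
  obtain ⟨g, hg, y, hy, rfl⟩ := hx
  have hyU : y ∈ QuotientGroup.mk '' BSet P Q m := interior_subset hy
  obtain ⟨a, ha, rfl⟩ := hyU
  have hga : g * a ∈ BSet P Q (N + m) := by
    rw [← BSet_mul P Q N m]
    exact Set.mul_mem_mul hg ha
  exact ⟨g * a, BSet_subset_succ P Q (N + m) hga, (smul_mk_eq P g a).symm⟩
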